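/- Let X ⊂ ℝ^d be a convex compact set and let μ be the measure with density f with respect to Lebesgue measure, where f is continuous on X, bounded below on X by a positive constant, and zero outside X. Let x_1, …, x_N ∈ ℝ^d (N ≥ 1) be pairwise distinct and let ν_1, …, ν_N be strictly positive reals with Σ_i ν_i = μ(X). If ψ, ψ' ∈ ℝ^N both satisfy μ(Lag_i^ψ) = ν_i and μ(Lag_i^{ψ'}) = ν_i for all i, then ψ and ψ' differ by a constant: there is c ∈ ℝ with ψ'_i = ψ_i + c for all i; in particular the two Laguerre diagrams coincide, Lag_i^{ψ'} = Lag_i^ψ for all i. -/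

import Mathlib

open MeasureTheory

/-- The Laguerre cell of index `i` for sites `x` and weights `ψ`. -/
def Lag {d N : ℕ} (x : Fin N → EuclideanSpace ℝ (Fin d)) (ψ : Fin N → ℝ) (i : Fin N) :
    Set (EuclideanSpace ℝ (Fin d)) :=
  {p | ∀ j, j ≠ i → ‖p - x i‖ ^ 2 - ψ i ≤ ‖p - x j‖ ^ 2 - ψ j}

section Helpers

open MeasureTheory Metric Set
open scoped RealInnerProductSpace

private lemma hyperplane_null' {d : ℕ} {v : EuclideanSpace ℝ (Fin d)} (hv : v ≠ 0) (c : ℝ) :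
    (volume : Measure (EuclideanSpace ℝ (Fin d))) {p | ⟪v, p⟫ = c} = 0 := by
  have hv2 : ⟪v, v⟫ ≠ 0 := (inner_self_ne_zero (𝕜 := ℝ)).mpr hv
  set w : EuclideanSpace ℝ (Fin d) := (c / ⟪v, v⟫) • v with hw
  have hwc : ⟪v, w⟫ = c := by
    rw [hw, real_inner_smul_right, div_mul_cancel₀ _ hv2]
  set A : AffineSubspace ℝ (EuclideanSpace ℝ (Fin d)) :=
    AffineSubspace.mk' w (LinearMap.ker (innerSL ℝ v : _ →L[ℝ] ℝ).toLinearMap) with hA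
  have hset : {p | ⟪v, p⟫ = c} = (A : Set (EuclideanSpace ℝ (Fin d))) := by
    ext p
    simp only [hA, AffineSubspace.mem_coe, AffineSubspace.mem_mk',
      LinearMap.mem_ker, ContinuousLinearMap.coe_coe, innerSL_apply_apply, vsub_eq_sub,
      inner_sub_right, hwc, mem_setOf_eq, sub_eq_zero]
  have hAne : A ≠ ⊤ := by
    intro htop
    have : w + v ∈ A := htop ▸ AffineSubspace.mem_top ℝ _ _
    rw [← AffineSubspace.mem_coe, ← hset] at this
    simp only [mem_setOf_eq, inner_add_right, hwc] at this
    have : ⟪v, v⟫ = 0 := by linarith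
    exact hv2 this
  rw [hset]
  exact Measure.addHaar_affineSubspace volume A hAne

private lemma lag_closed' {d N : ℕ} (x : Fin N → EuclideanSpace ℝ (Fin d)) (ψ : Fin N → ℝ)
    (i : Fin N) : IsClosed (Lag x ψ i) := by
  have : Lag x ψ i =
      ⋂ j ∈ {j : Fin N | j ≠ i}, {p : EuclideanSpace ℝ (Fin d) |
        ‖p - x i‖ ^ 2 - ψ i ≤ ‖p - x j‖ ^ 2 - ψ j} := by
    ext p; simp [Lag]
  rw [this]
  exact isClosed_biInter fun j _ => isClosed_le (by fun_prop) (by fun_prop)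

private lemma lag_mem_iff' {d N : ℕ} (x : Fin N → EuclideanSpace ℝ (Fin d)) (ψ : Fin N → ℝ)
    (i : Fin N) (p : EuclideanSpace ℝ (Fin d)) :
    p ∈ Lag x ψ i ↔ ∀ j, j ≠ i →
      2 * ⟪p, x j - x i⟫ ≤ ψ i - ψ j + ‖x j‖ ^ 2 - ‖x i‖ ^ 2 := by
  unfold Lag
  simp only [mem_setOf_eq]
  refine forall_congr' fun j => imp_congr Iff.rfl ?_
  rw [norm_sub_sq_real, norm_sub_sq_real, inner_sub_right]
  constructor <;> intro h <;> nlinarith [h]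

private lemma lag_convex' {d N : ℕ} (x : Fin N → EuclideanSpace ℝ (Fin d)) (ψ : Fin N → ℝ)
    (i : Fin N) : Convex ℝ (Lag x ψ i) := by
  have : Lag x ψ i = ⋂ j ∈ {j : Fin N | j ≠ i},
      {p : EuclideanSpace ℝ (Fin d) | 2 * ⟪p, x j - x i⟫ ≤ ψ i - ψ j + ‖x j‖ ^ 2 - ‖x i‖ ^ 2} := by
    ext p
    rw [lag_mem_iff']
    simp
  rw [this]
  refine convex_iInter fun j => convex_iInter fun _ => ?_
  refine convex_halfSpace_le ⟨fun a b => ?_, fun r a => ?_⟩ _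
  · rw [inner_add_left]; ring
  · rw [real_inner_smul_left, smul_eq_mul]; ring

private lemma lag_cover' {d N : ℕ} (hN : 1 ≤ N) (x : Fin N → EuclideanSpace ℝ (Fin d))
    (ψ : Fin N → ℝ) (p : EuclideanSpace ℝ (Fin d)) : ∃ i, p ∈ Lag x ψ i := by
  have hne : (Finset.univ : Finset (Fin N)).Nonempty := ⟨⟨0, hN⟩, Finset.mem_univ _⟩
  obtain ⟨i, -, hi⟩ := Finset.exists_min_image Finset.univ
    (fun j => ‖p - x j‖ ^ 2 - ψ j) hne
  exact ⟨i, fun j _ => hi j (Finset.mem_univ j)⟩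

private lemma lag_bisector' {d N : ℕ} (x : Fin N → EuclideanSpace ℝ (Fin d))
    (hx : Function.Injective x) (ψ : Fin N → ℝ) {i j : Fin N} (hij : i ≠ j) :
    (volume : Measure (EuclideanSpace ℝ (Fin d))) (Lag x ψ i ∩ Lag x ψ j) = 0 := by
  have hv : x j - x i ≠ 0 := sub_ne_zero.mpr fun h => hij (hx h.symm)
  refine measure_mono_null (fun p hp => ?_)
    (hyperplane_null' (v := (2:ℝ) • (x j - x i)) (by simpa using hv)
      (ψ i - ψ j + ‖x j‖ ^ 2 - ‖x i‖ ^ 2))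
  have h1 := (lag_mem_iff' x ψ i p).mp hp.1 j hij.symm
  have h2 : 2 * ⟪p, x i - x j⟫ ≤ ψ j - ψ i + ‖x i‖ ^ 2 - ‖x j‖ ^ 2 :=
    (lag_mem_iff' x ψ j p).mp hp.2 i hij
  rw [show x i - x j = -(x j - x i) by abel, inner_neg_right] at h2
  show ⟪(2:ℝ) • (x j - x i), p⟫ = _
  rw [real_inner_smul_left, real_inner_comm]
  linarith

private lemma convex_interior_nonempty' {d : ℕ} {s : Set (EuclideanSpace ℝ (Fin d))}
    (hs : Convex ℝ s) (h : (volume : Measure (EuclideanSpace ℝ (Fin d))) s ≠ 0) :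
    (interior s).Nonempty := by
  by_contra h'
  rw [not_nonempty_iff_eq_empty] at h'
  have hspan : affineSpan ℝ s ≠ ⊤ := by
    intro htop
    rw [← hs.interior_nonempty_iff_affineSpan_eq_top] at htop
    exact absurd h' htop.ne_empty
  exact h (measure_mono_null (subset_affineSpan ℝ s)
    (Measure.addHaar_affineSubspace volume _ hspan))

end Helpers

open Metric Set

/-- for a density bounded below on a convex compact set, two weight
vectors whose Laguerre cells carry the same prescribed positive masses differ by
an additive constant, and their Laguerre diagrams coincide. -/
theorem laguerre_weights_unique_up_to_constant {d N : ℕ} (hN : 1 ≤ N)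
    (X : Set (EuclideanSpace ℝ (Fin d))) (hXconv : Convex ℝ X) (hXcomp : IsCompact X)
    (f : EuclideanSpace ℝ (Fin d) → ℝ) (hfcont : ContinuousOn f X)
    (c₀ : ℝ) (hc₀ : 0 < c₀) (hfc : ∀ p ∈ X, c₀ ≤ f p) (hf0 : ∀ p ∉ X, f p = 0)
    (μ : Measure (EuclideanSpace ℝ (Fin d)))
    (hμ : μ = volume.withDensity fun p => ENNReal.ofReal (f p))
    (x : Fin N → EuclideanSpace ℝ (Fin d)) (hx : Function.Injective x)
    (ν : Fin N → ℝ) (hν : ∀ i, 0 < ν i) (hbal : ∑ i : Fin N, ν i = (μ X).toReal)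
    (ψ ψ' : Fin N → ℝ)
    (hψ : ∀ i : Fin N, (μ (Lag x ψ i)).toReal = ν i)
    (hψ' : ∀ i : Fin N, (μ (Lag x ψ' i)).toReal = ν i) :
    (∃ c : ℝ, ∀ i : Fin N, ψ' i = ψ i + c) ∧
    (∀ i : Fin N, Lag x ψ' i = Lag x ψ i) := by
  classical
  have hXmeas : MeasurableSet X := hXcomp.isClosed.measurableSet
  have hne : (Finset.univ : Finset (Fin N)).Nonempty := ⟨⟨0, hN⟩, Finset.mem_univ _⟩
  have habs : μ ≪ volume := by
    rw [hμ]; exact withDensity_absolutelyContinuous _ _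
  have hsumpos : 0 < ∑ i : Fin N, ν i := Finset.sum_pos (fun i _ => hν i) hne
  have hXne : X.Nonempty := by
    by_contra h
    rw [not_nonempty_iff_eq_empty] at h
    rw [h] at hbal
    simp at hbal
    exact absurd (hbal ▸ hsumpos) (lt_irrefl 0)
  obtain ⟨pM, hpM, hM'⟩ := hXcomp.exists_isMaxOn hXne hfcont
  have hM : ∀ p ∈ X, f p ≤ f pM := hM'
  have hμuniv : μ Set.univ < ⊤ := by
    rw [hμ, withDensity_apply _ MeasurableSet.univ, Measure.restrict_univ]
    calc ∫⁻ p, ENNReal.ofReal (f p) ∂volume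
        ≤ ∫⁻ p, X.indicator (fun _ => ENNReal.ofReal (f pM)) p ∂volume := by
          refine lintegral_mono fun p => ?_
          by_cases hp : p ∈ X
          · rw [indicator_of_mem hp]
            exact ENNReal.ofReal_le_ofReal (hM p hp)
          · rw [indicator_of_notMem hp, hf0 p hp]
            simp
      _ = ENNReal.ofReal (f pM) * volume X := by
          rw [lintegral_indicator hXmeas, setLIntegral_const]
      _ < ⊤ := ENNReal.mul_lt_top ENNReal.ofReal_lt_top hXcomp.measure_lt_top
  have hfin : ∀ s, μ s ≠ ⊤ := fun s => ((measure_mono (subset_univ s)).trans_lt hμuniv).ne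
  have hXc : μ Xᶜ = 0 := by
    rw [hμ, withDensity_apply _ hXmeas.compl,
      setLIntegral_congr_fun hXmeas.compl
        (fun p hp => by rw [hf0 p hp, ENNReal.ofReal_zero])]
    simp
  have hballpos : ∀ (p : EuclideanSpace ℝ (Fin d)) (r : ℝ), 0 < r → ball p r ⊆ X →
      μ (ball p r) ≠ 0 := by
    intro p r hr hsub h0
    have hle : ENNReal.ofReal c₀ * volume (ball p r)
        ≤ ∫⁻ q in ball p r, ENNReal.ofReal (f q) ∂volume := by
      rw [← setLIntegral_const]
      exact setLIntegral_mono' measurableSet_ball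
        (fun q hq => ENNReal.ofReal_le_ofReal (hfc q (hsub hq)))
    rw [← withDensity_apply _ measurableSet_ball, ← hμ, h0] at hle
    have hpos : 0 < ENNReal.ofReal c₀ * volume (ball p r) :=
      ENNReal.mul_pos (by simp [hc₀]) (measure_ball_pos volume p hr).ne'
    exact absurd (le_antisymm hle (zero_le)) hpos.ne'
  have hmeasL : ∀ (φ : Fin N → ℝ) i, MeasurableSet (Lag x φ i) :=
    fun φ i => (lag_closed' x φ i).measurableSet
  have hEq : ∀ i, μ (Lag x ψ i) = μ (Lag x ψ' i) := fun i =>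
    (ENNReal.toReal_eq_toReal_iff' (hfin _) (hfin _)).mp ((hψ i).trans (hψ' i).symm)
  have hposL : ∀ i, μ (Lag x ψ i) ≠ 0 := by
    intro i h0
    have := hψ i
    rw [h0, ENNReal.toReal_zero] at this
    exact (hν i).ne this
  -- the max of ψ' - ψ
  set g : Fin N → ℝ := fun i => ψ' i - ψ i with hg
  obtain ⟨i₀, -, hi₀⟩ := Finset.exists_max_image Finset.univ g hne
  set c : ℝ := g i₀ with hc
  have hgle : ∀ i, g i ≤ c := fun i => hi₀ i (Finset.mem_univ i)
  -- key claim
  have key : ∀ i, g i = c := by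
    by_contra hcon
    push_neg at hcon
    obtain ⟨j₀, hj₀⟩ := hcon
    -- containment for maximal indices
    have hsub : ∀ i, g i = c → Lag x ψ i ⊆ Lag x ψ' i := by
      intro i hi p hp j hj
      have h1 := hp j hj
      have h2 := hgle j
      simp only [hg] at hi h2
      linarith
    have hdiffnull : ∀ i, g i = c → μ (Lag x ψ' i \ Lag x ψ i) = 0 := by
      intro i hi
      rw [measure_diff (hsub i hi) (hmeasL ψ i).nullMeasurableSet (hfin _), ← hEq i,
        tsub_self]
    -- interior points of X inside cells
    have hint : ∀ i, (Lag x ψ i ∩ interior X).Nonempty := by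
      intro i
      refine nonempty_of_measure_ne_zero (μ := μ) fun h0 => hposL i ?_
      have hss : Lag x ψ i ⊆ (Lag x ψ i ∩ interior X) ∪ (frontier X ∪ Xᶜ) := by
        intro q hq
        by_cases hqX : q ∈ X
        · by_cases hqi : q ∈ interior X
          · exact Or.inl ⟨hq, hqi⟩
          · exact Or.inr (Or.inl ⟨subset_closure hqX, hqi⟩)
        · exact Or.inr (Or.inr hqX)
      have h2 : μ (frontier X) = 0 := habs (hXconv.addHaar_frontier volume)
      refine le_antisymm ?_ (zero_le)
      calc μ (Lag x ψ i) ≤ μ ((Lag x ψ i ∩ interior X) ∪ (frontier X ∪ Xᶜ)) :=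
            measure_mono hss
        _ ≤ μ (Lag x ψ i ∩ interior X) + (μ (frontier X) + μ Xᶜ) :=
            le_trans (measure_union_le _ _) (by gcongr; exact measure_union_le _ _)
        _ = 0 := by rw [h0, h2, hXc]; simp
    -- the two closed unions
    set S : Finset (Fin N) := Finset.univ.filter (fun i => g i = c) with hS
    set T : Finset (Fin N) := Finset.univ.filter (fun i => g i ≠ c) with hT
    set U : Set (EuclideanSpace ℝ (Fin d)) := ⋃ i ∈ S, Lag x ψ i with hU
    set V : Set (EuclideanSpace ℝ (Fin d)) := ⋃ i ∈ T, Lag x ψ i with hV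
    have hUclosed : IsClosed U := isClosed_biUnion_finset fun i _ => lag_closed' x ψ i
    have hVclosed : IsClosed V := isClosed_biUnion_finset fun i _ => lag_closed' x ψ i
    have hcover : interior X ⊆ U ∪ V := by
      intro q _
      obtain ⟨i, hi⟩ := lag_cover' hN x ψ q
      by_cases hgi : g i = c
      · exact Or.inl (mem_biUnion (Finset.mem_filter.mpr ⟨Finset.mem_univ _, hgi⟩) hi)
      · exact Or.inr (mem_biUnion (Finset.mem_filter.mpr ⟨Finset.mem_univ _, hgi⟩) hi)
    have hUne : (interior X ∩ U).Nonempty := by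
      obtain ⟨q, hq1, hq2⟩ := hint i₀
      exact ⟨q, hq2, mem_biUnion (Finset.mem_filter.mpr ⟨Finset.mem_univ _, hc.symm⟩) hq1⟩
    have hVne : (interior X ∩ V).Nonempty := by
      obtain ⟨q, hq1, hq2⟩ := hint j₀
      exact ⟨q, hq2, mem_biUnion (Finset.mem_filter.mpr ⟨Finset.mem_univ _, hj₀⟩) hq1⟩
    obtain ⟨p, hpX, hpU, hpV⟩ :=
      isPreconnected_closed_iff.mp (hXconv.interior.isPreconnected) U V
        hUclosed hVclosed hcover hUne hVne
    obtain ⟨i, hiS, hpLi⟩ := mem_iUnion₂.mp hpU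
    obtain ⟨j, hjT, hpLj⟩ := mem_iUnion₂.mp hpV
    have hgi : g i = c := (Finset.mem_filter.mp hiS).2
    have hgj : g j ≠ c := (Finset.mem_filter.mp hjT).2
    -- the open neighborhood
    set O : Set (EuclideanSpace ℝ (Fin d)) := interior X ∩
      ⋂ k ∈ T, {q | ‖q - x i‖ ^ 2 - ψ' i < ‖q - x k‖ ^ 2 - ψ' k} with hO
    have hOopen : IsOpen O :=
      isOpen_interior.inter (isOpen_biInter_finset fun k _ =>
        isOpen_lt (by fun_prop) (by fun_prop))
    have hpO : p ∈ O := by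
      refine ⟨hpX, mem_biInter fun k hk => ?_⟩
      have hgk : g k ≠ c := (Finset.mem_filter.mp hk).2
      have hki : k ≠ i := fun h => hgk (h ▸ hgi)
      have h1 : ‖p - x i‖ ^ 2 - ψ i ≤ ‖p - x k‖ ^ 2 - ψ k := hpLi k hki
      have h2 : g k < c := lt_of_le_of_ne (hgle k) hgk
      simp only [hg] at hgi h2
      simp only [mem_setOf_eq]
      linarith
    obtain ⟨δ, hδ, hballO⟩ := Metric.isOpen_iff.mp hOopen p hpO
    -- the ball is covered by the ψ'-cells of maximal indices
    have hballU' : ball p δ ⊆ ⋃ k ∈ S, Lag x ψ' k := by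
      intro q hq
      obtain ⟨m, hm⟩ := lag_cover' hN x ψ' q
      by_cases hgm : g m = c
      · exact mem_biUnion (Finset.mem_filter.mpr ⟨Finset.mem_univ _, hgm⟩) hm
      · exfalso
        have hmi : m ≠ i := fun h => hgm (h ▸ hgi)
        have h1 : ‖q - x m‖ ^ 2 - ψ' m ≤ ‖q - x i‖ ^ 2 - ψ' i := hm i hmi.symm
        have h2 := (hballO hq).2
        have h3 : q ∈ {q | ‖q - x i‖ ^ 2 - ψ' i < ‖q - x m‖ ^ 2 - ψ' m} := by
          have := mem_iInter₂.mp h2 m (Finset.mem_filter.mpr ⟨Finset.mem_univ _, hgm⟩)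
          exact this
        simp only [mem_setOf_eq] at h3
        linarith
    -- interior point of the cell of j
    have hvolLj : (volume : Measure (EuclideanSpace ℝ (Fin d))) (Lag x ψ j) ≠ 0 :=
      fun h => hposL j (habs h)
    obtain ⟨z, hz⟩ := convex_interior_nonempty' (lag_convex' x ψ j) hvolLj
    -- move slightly from p towards z
    set D : ℝ := dist z p with hD
    set t : ℝ := min (1/2) (δ / (2 * (D + 1))) with ht
    have hDpos : (0:ℝ) < D + 1 := by positivity
    have ht0 : 0 < t := lt_min (by norm_num) (by positivity)
    have ht1 : t ≤ 1/2 := min_le_left _ _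
    set w : EuclideanSpace ℝ (Fin d) := t • z + (1 - t) • p with hw
    have hwint : w ∈ interior (Lag x ψ j) :=
      (lag_convex' x ψ j).combo_interior_self_mem_interior hz hpLj ht0 (by linarith)
        (by ring)
    have hwp : dist w p < δ := by
      have : w - p = t • (z - p) := by
        rw [hw]
        module
      rw [dist_eq_norm, this, norm_smul, Real.norm_eq_abs, abs_of_pos ht0]
      have h1 : ‖z - p‖ = D := by rw [hD, dist_eq_norm]
      rw [h1]
      have h2 : t ≤ δ / (2 * (D + 1)) := min_le_right _ _
      have h3 : t * D ≤ δ / (2 * (D + 1)) * D := by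
        apply mul_le_mul_of_nonneg_right h2 dist_nonneg
      have h4 : δ / (2 * (D + 1)) * D < δ := by
        rw [div_mul_eq_mul_div, div_lt_iff₀ (by positivity)]
        nlinarith [dist_nonneg (x := z) (y := p)]
      linarith
    obtain ⟨ε₁, hε₁, hball₁⟩ := Metric.isOpen_iff.mp isOpen_interior w hwint
    set ε : ℝ := min ε₁ (δ - dist w p) with hε
    have hε0 : 0 < ε := lt_min hε₁ (by linarith)
    have hWLj : ball w ε ⊆ Lag x ψ j :=
      fun q hq => interior_subset (hball₁ (ball_subset_ball (min_le_left _ _) hq))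
    have hWpδ : ball w ε ⊆ ball p δ := by
      intro q hq
      have : dist q w < ε := mem_ball.mp hq
      have h2 : ε ≤ δ - dist w p := min_le_right _ _
      have := dist_triangle q w p
      rw [mem_ball]
      linarith
    -- positive measure of the small ball
    have hWX : ball w ε ⊆ X := fun q hq =>
      interior_subset (hballO (hWpδ hq)).1
    have hWpos : μ (ball w ε) ≠ 0 := hballpos w ε hε0 hWX
    -- but the small ball is contained in a null set
    have hWnull : μ (ball w ε) = 0 := by
      have hsubW : ball w ε ⊆
          ⋃ k ∈ S, ((Lag x ψ' k \ Lag x ψ k) ∪ (Lag x ψ k ∩ Lag x ψ j)) := by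
        intro q hq
        obtain ⟨k, hkS, hk⟩ := mem_iUnion₂.mp (hballU' (hWpδ hq))
        refine mem_biUnion hkS ?_
        by_cases hqk : q ∈ Lag x ψ k
        · exact Or.inr ⟨hqk, hWLj hq⟩
        · exact Or.inl ⟨hk, hqk⟩
      refine le_antisymm ?_ (zero_le)
      refine le_trans (measure_mono hsubW) (le_trans (measure_biUnion_finset_le _ _) ?_)
      refine le_of_eq (Finset.sum_eq_zero fun k hkS => ?_)
      have hgk : g k = c := (Finset.mem_filter.mp hkS).2
      have hkj : k ≠ j := fun h => hgj (h ▸ hgk)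
      exact measure_union_null (hdiffnull k hgk) (habs (lag_bisector' x hx ψ hkj))
    exact hWpos hWnull
  -- conclude
  have hconst : ∀ i, ψ' i = ψ i + c := by
    intro i
    have := key i
    simp only [hg] at this
    linarith
  refine ⟨⟨c, hconst⟩, fun i => ?_⟩
  ext p
  constructor <;> intro hp j hj <;> have h := hp j hj <;>
    rw [hconst i, hconst j] at * <;> linarith
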